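/- For every positive integer s there exist a positive integer n and a Bollobás system D = {(A_i^{(1)}, A_i^{(2)}, A_i^{(3)})}_{1≤i≤m} of 3-partitions of [n] with |⋃_{i=1}^m ⋃_{r=1}^3 A_i^{(r)}| = s such that ∑_{i=1}^m binom(|A_i^{(1)}| + |A_i^{(2)}| + |A_i^{(3)}|; |A_i^{(1)}|, |A_i^{(2)}|, |A_i^{(3)}|)^{-1} = ⌊s/2⌋ + 1. In particular, for every s ≥ 2 there is a Bollobás system of 3-partitions of [n] for which this sum is strictly greater than 1, disproving the conjecture of Hegedüs and Frankl that the sum is always at most 1 for Bollobás systems of d-partitions. -/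

import Mathlib

open Finset

namespace BollobasAux

/-- The ground set `[s] = {1, …, s}`. -/
def GS (s : ℕ) : Finset ℕ := Finset.Icc 1 s

/-- Index set: pairs `(a, c)` of disjoint subsets of the ground set with `|a| = |c|`. -/
def idx (s : ℕ) : Finset (Finset ℕ × Finset ℕ) :=
  ((GS s).powerset ×ˢ (GS s).powerset).filter
    (fun x => Disjoint x.1 x.2 ∧ x.1.card = x.2.card)

/-- The 3-partition associated to an index. -/
def triple (s : ℕ) (x : Finset ℕ × Finset ℕ) : Fin 3 → Finset ℕ :=
  fun r => if r = 0 then x.1 else if r = 2 then x.2 else GS s \ (x.1 ∪ x.2)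

lemma triple_zero (s : ℕ) (x : Finset ℕ × Finset ℕ) : triple s x 0 = x.1 := rfl
lemma triple_one (s : ℕ) (x : Finset ℕ × Finset ℕ) :
    triple s x 1 = GS s \ (x.1 ∪ x.2) := rfl
lemma triple_two (s : ℕ) (x : Finset ℕ × Finset ℕ) : triple s x 2 = x.2 := rfl

lemma mem_idx {s : ℕ} {x : Finset ℕ × Finset ℕ} :
    x ∈ idx s ↔ x.1 ⊆ GS s ∧ x.2 ⊆ GS s ∧ Disjoint x.1 x.2 ∧ x.1.card = x.2.card := by
  simp [idx, Finset.mem_filter, Finset.mem_product, and_assoc]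

lemma card_GS (s : ℕ) : (GS s).card = s := by simp [GS]

lemma triple_subset {s : ℕ} {x : Finset ℕ × Finset ℕ} (hx : x ∈ idx s) (r : Fin 3) :
    triple s x r ⊆ GS s := by
  rw [mem_idx] at hx
  fin_cases r
  · exact hx.1
  · exact Finset.sdiff_subset
  · exact hx.2.1

lemma two_card_le {s : ℕ} {x : Finset ℕ × Finset ℕ} (hx : x ∈ idx s) :
    2 * x.1.card ≤ s := by
  rw [mem_idx] at hx
  obtain ⟨h1, h2, hd, hc⟩ := hx
  have := Finset.card_le_card (Finset.union_subset h1 h2)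
  rw [Finset.card_union_of_disjoint hd, card_GS] at this
  omega

lemma card_triple_one {s : ℕ} {x : Finset ℕ × Finset ℕ} (hx : x ∈ idx s) :
    (triple s x 1).card = s - 2 * x.1.card := by
  rw [mem_idx] at hx
  obtain ⟨h1, h2, hd, hc⟩ := hx
  rw [triple_one, Finset.card_sdiff_of_subset (Finset.union_subset h1 h2),
    Finset.card_union_of_disjoint hd, card_GS]
  omega

/-- The multinomial coefficient of a triple indexed by `(a,c)` with `|a| = k`. -/
lemma multinomial_triple {s : ℕ} {x : Finset ℕ × Finset ℕ} (hx : x ∈ idx s) :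
    Nat.multinomial Finset.univ (fun r : Fin 3 => (triple s x r).card)
      = s.choose x.1.card * (s - x.1.card).choose x.1.card := by
  have hc : x.1.card = x.2.card := (mem_idx.mp hx).2.2.2
  have h2k := two_card_le hx
  have huniv : (Finset.univ : Finset (Fin 3)) = insert 0 {1, 2} := by decide
  rw [huniv, Nat.multinomial_insert (by decide),
    Nat.binomial_eq_choose (by decide : (1 : Fin 3) ≠ 2)]
  rw [Finset.sum_pair (by decide : (1 : Fin 3) ≠ 2)]
  rw [triple_zero, triple_two, card_triple_one hx, ← hc]
  have e1 : x.1.card + (s - 2 * x.1.card + x.1.card) = s := by omega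
  have e2 : s - 2 * x.1.card + x.1.card = s - x.1.card := by omega
  rw [e1, e2]
  congr 1
  have e3 : s - 2 * x.1.card = (s - x.1.card) - x.1.card := by omega
  rw [e3, Nat.choose_symm (by omega)]

/-- The fiber of the index set over `k = |a|`. -/
lemma fiber_eq (s k : ℕ) :
    (idx s).filter (fun x => x.1.card = k)
      = ((GS s).powersetCard k).biUnion
          (fun a => ((GS s \ a).powersetCard k).image (fun c => (a, c))) := by
  ext x
  simp only [Finset.mem_filter, Finset.mem_biUnion, Finset.mem_image,
    Finset.mem_powersetCard, mem_idx]
  constructor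
  · rintro ⟨⟨h1, h2, hd, hc⟩, hk⟩
    exact ⟨x.1, ⟨h1, hk⟩, x.2, ⟨Finset.subset_sdiff.mpr ⟨h2, hd.symm⟩, by omega⟩, rfl⟩
  · rintro ⟨a, ⟨ha, hak⟩, c, ⟨hc, hck⟩, rfl⟩
    rw [Finset.subset_sdiff] at hc
    exact ⟨⟨ha, hc.1, hc.2.symm, show a.card = c.card by omega⟩,
      show a.card = k from hak⟩

lemma card_fiber (s k : ℕ) :
    ((idx s).filter (fun x => x.1.card = k)).card
      = s.choose k * (s - k).choose k := by
  rw [fiber_eq, Finset.card_biUnion]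
  · rw [Finset.sum_congr rfl (fun a ha => ?_), Finset.sum_const,
      Finset.card_powersetCard, card_GS, smul_eq_mul]
    rw [Finset.card_image_of_injective _ (fun c c' h => by simpa using h),
      Finset.card_powersetCard, Finset.card_sdiff_of_subset (Finset.mem_powersetCard.mp ha).1,
      card_GS, (Finset.mem_powersetCard.mp ha).2]
  · intro a ha b hb hab
    simp only [Finset.disjoint_left, Finset.mem_image]
    rintro x ⟨c, _, rfl⟩ ⟨c', _, h⟩
    exact hab (by simpa using (Prod.ext_iff.mp h).1.symm)

lemma choose_pos_prod {s k : ℕ} (hk : k ≤ s / 2) :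
    0 < s.choose k * (s - k).choose k :=
  Nat.mul_pos (Nat.choose_pos (by omega)) (Nat.choose_pos (by omega))

/-- Pairwise disjointness inside a triple. -/
lemma triple_disjoint {s : ℕ} {x : Finset ℕ × Finset ℕ} (hx : x ∈ idx s)
    (p q : Fin 3) (hpq : p ≠ q) : Disjoint (triple s x p) (triple s x q) := by
  obtain ⟨h1, h2, hd, _⟩ := mem_idx.mp hx
  have d01 : Disjoint x.1 (GS s \ (x.1 ∪ x.2)) :=
    Finset.disjoint_sdiff.mono_left Finset.subset_union_left
  have d12 : Disjoint (GS s \ (x.1 ∪ x.2)) x.2 :=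
    (Finset.disjoint_sdiff.mono_left Finset.subset_union_right).symm
  fin_cases p <;> fin_cases q <;>
    simp only [triple_zero, triple_one, triple_two] <;>
    first
      | exact absurd rfl hpq
      | exact hd
      | exact hd.symm
      | exact d01
      | exact d01.symm
      | exact d12
      | exact d12.symm

/-- The Bollobás condition. -/
lemma bollobas {s : ℕ} {x y : Finset ℕ × Finset ℕ} (hx : x ∈ idx s) (hy : y ∈ idx s)
    (hxy : x ≠ y) :
    ∃ p q : Fin 3, p < q ∧ ((triple s x p) ∩ (triple s y q)).Nonempty := by
  by_contra h
  push_neg at h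
  have h01 := h 0 1 (by decide)
  have h02 := h 0 2 (by decide)
  have h12 := h 1 2 (by decide)
  rw [triple_zero, triple_one, triple_two] at *
  obtain ⟨hx1, hx2, hxd, hxc⟩ := mem_idx.mp hx
  obtain ⟨hy1, hy2, hyd, hyc⟩ := mem_idx.mp hy
  -- x.1 ⊆ y.1
  have hsub1 : x.1 ⊆ y.1 := by
    intro e he
    by_contra hne
    have heG : e ∈ GS s := hx1 he
    have he2 : e ∉ y.2 := fun h2 =>
      (Finset.eq_empty_iff_forall_notMem.mp h02 e) (Finset.mem_inter.mpr ⟨he, h2⟩)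
    have : e ∈ GS s \ (y.1 ∪ y.2) := by
      simp only [Finset.mem_sdiff, Finset.mem_union]
      exact ⟨heG, fun hc => hc.elim hne he2⟩
    exact (Finset.eq_empty_iff_forall_notMem.mp h01 e) (Finset.mem_inter.mpr ⟨he, this⟩)
  -- y.2 ⊆ x.2
  have hsub2 : y.2 ⊆ x.2 := by
    intro e he
    by_contra hne
    have heG : e ∈ GS s := hy2 he
    have he1 : e ∉ x.1 := fun h1 =>
      (Finset.eq_empty_iff_forall_notMem.mp h02 e) (Finset.mem_inter.mpr ⟨h1, he⟩)
    have : e ∈ GS s \ (x.1 ∪ x.2) := by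
      simp only [Finset.mem_sdiff, Finset.mem_union]
      exact ⟨heG, fun hc => hc.elim he1 hne⟩
    exact (Finset.eq_empty_iff_forall_notMem.mp h12 e) (Finset.mem_inter.mpr ⟨this, he⟩)
  have hle1 := Finset.card_le_card hsub1
  have hle2 := Finset.card_le_card hsub2
  have hq1 : x.1 = y.1 := Finset.eq_of_subset_of_card_le hsub1 (by omega)
  have hq2 : y.2 = x.2 := Finset.eq_of_subset_of_card_le hsub2 (by omega)
  exact hxy (Prod.ext hq1 hq2.symm)

/-- The weighted sum over the index set. -/
lemma sum_idx (s : ℕ) :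
    ∑ x ∈ idx s,
        ((Nat.multinomial Finset.univ fun r : Fin 3 => (triple s x r).card : ℕ) : ℚ)⁻¹
      = ((s / 2 + 1 : ℕ) : ℚ) := by
  rw [← Finset.sum_fiberwise_of_maps_to (g := fun x => x.1.card)
      (t := Finset.range (s / 2 + 1))
      (fun x hx => Finset.mem_range.mpr (show x.1.card < s / 2 + 1 by
        have := two_card_le hx; omega))]
  have : ∀ k ∈ Finset.range (s / 2 + 1),
      (∑ x ∈ (idx s).filter (fun x => x.1.card = k),
        ((Nat.multinomial Finset.univ fun r : Fin 3 => (triple s x r).card : ℕ) : ℚ)⁻¹)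
      = 1 := by
    intro k hk
    have hk' : k ≤ s / 2 := by simpa using Nat.lt_succ_iff.mp (Finset.mem_range.mp hk)
    have hpos := choose_pos_prod hk'
    have hconst : ∀ x ∈ (idx s).filter (fun x => x.1.card = k),
        ((Nat.multinomial Finset.univ fun r : Fin 3 => (triple s x r).card : ℕ) : ℚ)⁻¹
          = ((s.choose k * (s - k).choose k : ℕ) : ℚ)⁻¹ := by
      intro x hx
      rw [Finset.mem_filter] at hx
      rw [multinomial_triple hx.1, hx.2]
    rw [Finset.sum_congr rfl hconst, Finset.sum_const, card_fiber, nsmul_eq_mul]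
    rw [mul_inv_eq_one₀]
    exact Nat.cast_ne_zero.mpr hpos.ne'
  rw [Finset.sum_congr rfl this, Finset.sum_const, Finset.card_range, nsmul_eq_mul,
    mul_one, Nat.cast_add, Nat.cast_one]

lemma empty_mem_idx (s : ℕ) : ((∅ : Finset ℕ), (∅ : Finset ℕ)) ∈ idx s := by
  rw [mem_idx]
  simp

end BollobasAux

open BollobasAux in
/-- **Theorem (disproof of the Hegedüs–Frankl conjecture).** For every positive
integer `s` there exist `n` and a Bollobás system of `3`-partitions of `[n]` with
support of size `s` whose weighted sum equals `⌊s/2⌋ + 1`; in particular for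
`s ≥ 2` the sum exceeds `1`, disproving the conjecture. -/
theorem bollobas_three_partitions_tight (s : ℕ) (hs : 1 ≤ s) :
    ∃ n m : ℕ, ∃ A : Fin m → Fin 3 → Finset ℕ,
      (∀ i r, A i r ⊆ Finset.Icc 1 n) ∧
      (∀ i, ∀ p q : Fin 3, p ≠ q → Disjoint (A i p) (A i q)) ∧
      (∀ i j : Fin m, i ≠ j →
        ∃ p q : Fin 3, p < q ∧ ((A i p) ∩ (A j q)).Nonempty) ∧
      (Finset.univ.biUnion fun i : Fin m =>
        Finset.univ.biUnion fun r : Fin 3 => A i r).card = s ∧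
      ∑ i : Fin m,
          ((Nat.multinomial Finset.univ fun r : Fin 3 => (A i r).card : ℕ) : ℚ)⁻¹
        = ((s / 2 + 1 : ℕ) : ℚ) ∧
      (2 ≤ s → (1 : ℚ) < ∑ i : Fin m,
          ((Nat.multinomial Finset.univ fun r : Fin 3 => (A i r).card : ℕ) : ℚ)⁻¹) := by
  classical
  refine ⟨s, (idx s).card, ?_⟩
  let e : {x // x ∈ idx s} ≃ Fin (idx s).card :=
    Fintype.equivFinOfCardEq (Fintype.card_coe _)
  have hsum : ∑ i : Fin (idx s).card,
      ((Nat.multinomial Finset.univ fun r : Fin 3 =>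
        ((triple s ((e.symm i : {x // x ∈ idx s}) : Finset ℕ × Finset ℕ)) r).card : ℕ) : ℚ)⁻¹
      = ((s / 2 + 1 : ℕ) : ℚ) := by
    rw [← sum_idx s, ← Finset.sum_coe_sort (idx s)]
    exact Fintype.sum_equiv e.symm _ _ (fun i => rfl)
  refine ⟨fun i => triple s (e.symm i : {x // x ∈ idx s}).1, ?_, ?_, ?_, ?_, ?_, ?_⟩
  · intro i r
    exact triple_subset (e.symm i).2 r
  · intro i p q hpq
    exact triple_disjoint (e.symm i).2 p q hpq
  · intro i j hij
    refine bollobas (e.symm i).2 (e.symm j).2 ?_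
    intro hxy
    exact hij (by
      have : e.symm i = e.symm j := Subtype.ext hxy
      exact e.symm.injective this)
  · -- union has cardinality s
    have hU : (Finset.univ.biUnion fun i : Fin (idx s).card =>
        Finset.univ.biUnion fun r : Fin 3 =>
          triple s (e.symm i : {x // x ∈ idx s}).1 r) = GS s := by
      apply Finset.Subset.antisymm
      · intro a ha
        simp only [Finset.mem_biUnion] at ha
        obtain ⟨i, _, r, _, har⟩ := ha
        exact triple_subset (e.symm i).2 r har
      · intro a ha
        simp only [Finset.mem_biUnion]
        refine ⟨e ⟨(∅, ∅), empty_mem_idx s⟩, Finset.mem_univ _, 1, Finset.mem_univ _, ?_⟩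
        rw [Equiv.symm_apply_apply]
        simpa [triple_one] using ha
    rw [hU, card_GS]
  · exact hsum
  · intro hs2
    rw [hsum]
    exact_mod_cast (show (1:ℕ) < s / 2 + 1 by omega)
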